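/- Let d ≥ 2 and 0 < p ≤ p' < 1. Under the standard monotone coupling of bond percolation with parameters p and p', almost surely limsup_{N→∞} (Z_N(ω_p))^{1/N} / p ≤ limsup_{N→∞} (Z_N(ω_{p'}))^{1/N} / p'. (This expresses that the ratio between the quenched and annealed connective constants is non-decreasing in p.) -/

import Mathlib

open MeasureTheory ProbabilityTheory Filter

namespace SAW

abbrev V (d : ℕ) := Fin d → ℤ
abbrev Edge (d : ℕ) := (Fin d → ℤ) × Fin d

/-- The `i`-th unit vector of `ℤ^d`. -/
def unit (d : ℕ) (i : Fin d) : V d := fun j => if j = i then 1 else 0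

/-- Nearest-neighbour adjacency on `ℤ^d`. -/
def Adj {d : ℕ} (x y : V d) : Prop :=
  ∃ i : Fin d, y = x + unit d i ∨ x = y + unit d i

/-- Self-avoiding nearest-neighbour path of length `N` in `ℤ^d`. -/
def IsSAW {d N : ℕ} (S : Fin (N + 1) → V d) : Prop :=
  Function.Injective S ∧ ∀ n : Fin N, Adj (S n.castSucc) (S n.succ)

/-- The path `S` uses the edge `e` (the edge `e = (v, i)` joins `v` and `v + unit d i`). -/
def UsesEdge {d N : ℕ} (S : Fin (N + 1) → V d) (e : Edge d) : Prop :=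
  ∃ n : Fin N,
    (S n.castSucc = e.1 ∧ S n.succ = e.1 + unit d e.2) ∨
    (S n.succ = e.1 ∧ S n.castSucc = e.1 + unit d e.2)

/-- The path `S` is open for the environment `η` (`η e` means that the edge `e` is open). -/
def OpenPath {d N : ℕ} (η : Edge d → Prop) (S : Fin (N + 1) → V d) : Prop :=
  ∀ e : Edge d, UsesEdge S e → η e

/-- `s_N` : the number of self-avoiding paths of length `N` starting at the origin. -/
noncomputable def sCount (d N : ℕ) : ℕ :=
  Nat.card {S : Fin (N + 1) → V d // IsSAW S ∧ S 0 = 0}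

/-- `Z_N(x)` : the number of open self-avoiding paths of length `N` starting at `x`. -/
noncomputable def Z {d : ℕ} (η : Edge d → Prop) (N : ℕ) (x : V d) : ℕ :=
  Nat.card {S : Fin (N + 1) → V d // IsSAW S ∧ S 0 = x ∧ OpenPath η S}

/-! ### unit vector lemmas -/

lemma unit_apply_self (d : ℕ) (i : Fin d) : unit d i i = 1 := by simp [unit]

lemma unit_inj {d : ℕ} {i j : Fin d} (h : unit d i = unit d j) : i = j := by
  by_contra hne
  have h2 := congrFun h i
  have : unit d i i = (1 : ℤ) := by simp [unit]
  have h3 : unit d j i = (0 : ℤ) := by simp [unit, hne]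
  rw [this, h3] at h2
  exact one_ne_zero h2

lemma unit_add_unit_ne_zero {d : ℕ} (i j : Fin d) : unit d i + unit d j ≠ 0 := by
  intro h
  have h2 := congrFun h i
  have hii : unit d i i = (1 : ℤ) := by simp [unit]
  have : (unit d i + unit d j) i = 1 + unit d j i := by simp [hii]
  rw [this] at h2
  have : unit d j i = (0 : ℤ) ∨ unit d j i = (1 : ℤ) := by
    by_cases hij : i = j <;> simp [unit, hij]
  rcases this with h3 | h3 <;> rw [h3] at h2 <;> simp at h2

/-! ### pathEdge -/

variable {d N : ℕ}

noncomputable def pathEdge [NeZero d] (S : Fin (N + 1) → V d) (n : Fin N) : Edge d :=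
  if h : ∃ i, S n.succ = S n.castSucc + unit d i then (S n.castSucc, h.choose)
  else if h2 : ∃ i, S n.castSucc = S n.succ + unit d i then (S n.succ, h2.choose)
  else (0, 0)

lemma pathEdge_spec [NeZero d] (S : Fin (N + 1) → V d) (n : Fin N)
    (hadj : Adj (S n.castSucc) (S n.succ)) :
    (S n.castSucc = (pathEdge S n).1 ∧
      S n.succ = (pathEdge S n).1 + unit d (pathEdge S n).2) ∨
    (S n.succ = (pathEdge S n).1 ∧
      S n.castSucc = (pathEdge S n).1 + unit d (pathEdge S n).2) := by
  obtain ⟨i, hi | hi⟩ := hadj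
  · have h : ∃ i, S n.succ = S n.castSucc + unit d i := ⟨i, hi⟩
    left
    simp only [pathEdge, dif_pos h]
    exact ⟨trivial, h.choose_spec⟩
  · by_cases h : ∃ i, S n.succ = S n.castSucc + unit d i
    · left
      simp only [pathEdge, dif_pos h]
      exact ⟨trivial, h.choose_spec⟩
    · have h2 : ∃ i, S n.castSucc = S n.succ + unit d i := ⟨i, hi⟩
      right
      simp only [pathEdge, dif_neg h, dif_pos h2]
      exact ⟨trivial, h2.choose_spec⟩

/-- uniqueness of the edge with given endpoints -/
lemma edge_unique {x y : V d} {e f : Edge d}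
    (he : (x = e.1 ∧ y = e.1 + unit d e.2) ∨ (y = e.1 ∧ x = e.1 + unit d e.2))
    (hf : (x = f.1 ∧ y = f.1 + unit d f.2) ∨ (y = f.1 ∧ x = f.1 + unit d f.2)) :
    e = f := by
  obtain ⟨he1, he2⟩ | ⟨he1, he2⟩ := he <;> obtain ⟨hf1, hf2⟩ | ⟨hf1, hf2⟩ := hf
  · have h1 : e.1 = f.1 := he1 ▸ hf1 ▸ rfl
    have h2 : unit d e.2 = unit d f.2 := by
      have := he2.symm.trans hf2
      rw [h1] at this
      exact add_left_cancel this
    exact Prod.ext h1 (unit_inj h2)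
  · exfalso
    apply unit_add_unit_ne_zero e.2 f.2
    have hx : x = x + (unit d e.2 + unit d f.2) := by
      calc x = f.1 + unit d f.2 := hf2
        _ = y + unit d f.2 := by rw [hf1]
        _ = (e.1 + unit d e.2) + unit d f.2 := by rw [← he2]
        _ = (x + unit d e.2) + unit d f.2 := by rw [he1]
        _ = x + (unit d e.2 + unit d f.2) := by rw [add_assoc]
    exact (left_eq_add).mp hx
  · exfalso
    apply unit_add_unit_ne_zero e.2 f.2
    have hx : y = y + (unit d e.2 + unit d f.2) := by
      calc y = f.1 + unit d f.2 := hf2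
        _ = x + unit d f.2 := by rw [hf1]
        _ = (e.1 + unit d e.2) + unit d f.2 := by rw [← he2]
        _ = (y + unit d e.2) + unit d f.2 := by rw [he1]
        _ = y + (unit d e.2 + unit d f.2) := by rw [add_assoc]
    exact (left_eq_add).mp hx
  · have h1 : e.1 = f.1 := he1 ▸ hf1 ▸ rfl
    have h2 : unit d e.2 = unit d f.2 := by
      have := he2.symm.trans hf2
      rw [h1] at this
      exact add_left_cancel this
    exact Prod.ext h1 (unit_inj h2)

lemma usesEdge_iff [NeZero d] {S : Fin (N + 1) → V d} (hS : IsSAW S) (e : Edge d) :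
    UsesEdge S e ↔ ∃ n, pathEdge S n = e := by
  constructor
  · rintro ⟨n, hn⟩
    exact ⟨n, (edge_unique (pathEdge_spec S n (hS.2 n)) hn)⟩
  · rintro ⟨n, rfl⟩
    exact ⟨n, pathEdge_spec S n (hS.2 n)⟩

lemma pathEdge_injective [NeZero d] {S : Fin (N + 1) → V d} (hS : IsSAW S) :
    Function.Injective (pathEdge S) := by
  intro n m h
  have hn := pathEdge_spec S n (hS.2 n)
  have hm := pathEdge_spec S m (hS.2 m)
  rw [h] at hn
  obtain ⟨hn1, hn2⟩ | ⟨hn1, hn2⟩ := hn <;> obtain ⟨hm1, hm2⟩ | ⟨hm1, hm2⟩ := hm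
  · have := hS.1 (hn1.trans hm1.symm)
    exact Fin.castSucc_injective _ this
  · have h1 : n.castSucc = m.succ := hS.1 (hn1.trans hm1.symm)
    have h2 : n.succ = m.castSucc := hS.1 ((hn2.trans hm2.symm))
    have e1 : (n : ℕ) = (m : ℕ) + 1 := congrArg Fin.val h1
    have e2 : (n : ℕ) + 1 = (m : ℕ) := congrArg Fin.val h2
    omega
  · have h1 : n.succ = m.castSucc := hS.1 (hn1.trans hm1.symm)
    have h2 : n.castSucc = m.succ := hS.1 ((hn2.trans hm2.symm))
    have e1 : (n : ℕ) + 1 = (m : ℕ) := congrArg Fin.val h1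
    have e2 : (n : ℕ) = (m : ℕ) + 1 := congrArg Fin.val h2
    omega
  · have := hS.1 (hn1.trans hm1.symm)
    exact Fin.succ_injective _ this

lemma openPath_iff [NeZero d] {S : Fin (N + 1) → V d} (hS : IsSAW S) (η : Edge d → Prop) :
    OpenPath η S ↔ ∀ n : Fin N, η (pathEdge S n) := by
  constructor
  · intro h n
    exact h _ ((usesEdge_iff hS _).mpr ⟨n, rfl⟩)
  · intro h e he
    obtain ⟨n, rfl⟩ := (usesEdge_iff hS e).mp he
    exact h n

/-! ### counting -/

open Finset in
noncomputable def stepFinset (d : ℕ) : Finset (V d) :=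
  (Finset.univ.image (unit d)) ∪ (Finset.univ.image (fun i => -unit d i))

lemma card_stepFinset (d : ℕ) : (stepFinset d).card ≤ 2 * d := by
  classical
  calc (stepFinset d).card
      ≤ (Finset.univ.image (unit d)).card +
        (Finset.univ.image (fun i : Fin d => -unit d i)).card := Finset.card_union_le _ _
    _ ≤ d + d := by
        gcongr <;> calc _ ≤ (Finset.univ : Finset (Fin d)).card := Finset.card_image_le
          _ = d := by simp
    _ = 2 * d := by ring

lemma step_mem {S : Fin (N + 1) → V d} (hS : IsSAW S) (n : Fin N) :
    S n.succ - S n.castSucc ∈ stepFinset d := by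
  classical
  obtain ⟨i, hi | hi⟩ := hS.2 n
  · have : S n.succ - S n.castSucc = unit d i := by rw [hi]; ring
    rw [this]
    exact Finset.mem_union_left _ (Finset.mem_image_of_mem _ (Finset.mem_univ i))
  · have : S n.succ - S n.castSucc = -unit d i := by rw [hi]; ring
    rw [this]
    exact Finset.mem_union_right _ (Finset.mem_image_of_mem _ (Finset.mem_univ i))

lemma eq_of_steps {S S' : Fin (N + 1) → V d} (h0 : S 0 = S' 0)
    (hstep : ∀ n : Fin N, S n.succ - S n.castSucc = S' n.succ - S' n.castSucc) : S = S' := by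
  funext m
  induction m using Fin.induction with
  | zero => exact h0
  | succ i ih =>
      have h1 : S i.succ = (S i.succ - S i.castSucc) + S i.castSucc := by ring
      rw [h1, hstep i, ih]
      ring

lemma saw_finite (d N : ℕ) : {S : Fin (N + 1) → V d | IsSAW S ∧ S 0 = 0}.Finite := by
  classical
  set A := {S : Fin (N + 1) → V d | IsSAW S ∧ S 0 = 0}
  have hinj : Function.Injective
      (fun S : A => fun n : Fin N => (⟨S.1 n.succ - S.1 n.castSucc, step_mem S.2.1 n⟩ :
        {v // v ∈ stepFinset d})) := by
    intro S T h
    ext1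
    apply eq_of_steps (S.2.2.trans T.2.2.symm)
    intro n
    exact congrArg Subtype.val (congrFun h n)
  haveI : Finite A := Finite.of_injective _ hinj
  exact Set.toFinite _

noncomputable def sawFinset (d N : ℕ) : Finset (Fin (N + 1) → V d) :=
  (saw_finite d N).toFinset

lemma mem_sawFinset {S : Fin (N + 1) → V d} :
    S ∈ sawFinset d N ↔ IsSAW S ∧ S 0 = 0 := Set.Finite.mem_toFinset _

open Classical in
lemma Z_eq_card (η : Edge d → Prop) (N : ℕ) :
    Z η N 0 = ((sawFinset d N).filter (fun S => OpenPath η S)).card := by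
  have hset : {S : Fin (N + 1) → V d | IsSAW S ∧ S 0 = 0 ∧ OpenPath η S} =
      ↑((sawFinset d N).filter (fun S => OpenPath η S)) := by
    ext S
    simp only [Set.mem_setOf_eq, Finset.coe_filter, mem_sawFinset, Set.mem_setOf_eq]
    tauto
  calc Z η N 0
      = Nat.card ↥{S : Fin (N + 1) → V d | IsSAW S ∧ S 0 = 0 ∧ OpenPath η S} := rfl
    _ = Set.ncard {S : Fin (N + 1) → V d | IsSAW S ∧ S 0 = 0 ∧ OpenPath η S} :=
        Nat.card_coe_set_eq _
    _ = _ := by rw [hset, Set.ncard_coe_finset]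

open Classical in
lemma Z_mono {η η' : Edge d → Prop} (h : ∀ e, η e → η' e) (N : ℕ) :
    Z η N 0 ≤ Z η' N 0 := by
  rw [Z_eq_card, Z_eq_card]
  apply Finset.card_le_card
  intro S hS
  simp only [Finset.mem_filter] at hS ⊢
  exact ⟨hS.1, fun e he => h e (hS.2 e he)⟩

lemma sawFinset_card_le (d N : ℕ) : (sawFinset d N).card ≤ (2 * d) ^ N := by
  classical
  have h := Finset.card_le_card_of_injOn
    (f := fun (S : Fin (N + 1) → V d) => fun n : Fin N => S n.succ - S n.castSucc)
    (s := sawFinset d N) (t := Fintype.piFinset (fun _ : Fin N => stepFinset d))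
    (by
      intro S hS
      rw [Finset.mem_coe, mem_sawFinset] at hS
      simp only [Finset.mem_coe, Fintype.mem_piFinset]
      exact fun n => step_mem hS.1 n)
    (by
      intro S hS T hT h
      simp only [Finset.mem_coe, mem_sawFinset] at hS hT
      exact eq_of_steps (hS.2.trans hT.2.symm) (fun n => congrFun h n))
  calc (sawFinset d N).card ≤ _ := h
    _ = (stepFinset d).card ^ N := by
        rw [Fintype.card_piFinset]
        simp
    _ ≤ (2 * d) ^ N := Nat.pow_le_pow_left (card_stepFinset d) N

open Classical in
lemma Z_le_pow (η : Edge d → Prop) (N : ℕ) : Z η N 0 ≤ (2 * d) ^ N := by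
  rw [Z_eq_card]
  exact le_trans (Finset.card_filter_le _ _) (sawFinset_card_le d N)

noncomputable def edgeFinset [NeZero d] (S : Fin (N + 1) → V d) : Finset (Edge d) :=
  Finset.image (pathEdge S) Finset.univ

lemma mem_edgeFinset [NeZero d] {S : Fin (N + 1) → V d} {e : Edge d} :
    e ∈ edgeFinset S ↔ ∃ n, pathEdge S n = e := by simp [edgeFinset]

lemma card_edgeFinset [NeZero d] {S : Fin (N + 1) → V d} (hS : IsSAW S) :
    (edgeFinset S).card = N := by
  rw [edgeFinset, Finset.card_image_of_injective _ (pathEdge_injective hS)]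
  simp

/-! ### probability part -/

noncomputable def bigF (d N : ℕ) [NeZero d] : Finset (Edge d) :=
  (sawFinset d N).biUnion (fun S => edgeFinset S)

lemma edgeFinset_subset_bigF [NeZero d] {S : Fin (N + 1) → V d} (hS : S ∈ sawFinset d N) :
    edgeFinset S ⊆ bigF d N := by
  intro e he
  exact Finset.mem_biUnion.mpr ⟨S, hS, he⟩

def cylSet {d : ℕ} (p' : ℝ) (T : Finset (Edge d)) (e : Edge d) : Set ℝ :=
  if e ∈ T then Set.Iic p' else (Set.Iic p')ᶜ

lemma measurable_cylSet {d : ℕ} (p' : ℝ) (T : Finset (Edge d)) (e : Edge d) :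
    MeasurableSet (cylSet p' T e) := by
  rw [cylSet]
  split <;> [exact measurableSet_Iic; exact measurableSet_Iic.compl]

section Prob

variable {d N : ℕ} [NeZero d] {Ω : Type*} [MeasurableSpace Ω] (X : Ω → Edge d → ℝ)

def Cyl (p' : ℝ) (N : ℕ) (T : Finset (Edge d)) : Set Ω :=
  ⋂ e ∈ bigF d N, (fun a => X a e) ⁻¹' cylSet p' T e

def openE (q : ℝ) (S : Fin (N + 1) → V d) : Set Ω :=
  {a | OpenPath (fun e => X a e ≤ q) S}

lemma mem_Cyl {p' : ℝ} {T : Finset (Edge d)} {a : Ω} :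
    a ∈ Cyl X p' N T ↔ ∀ e ∈ bigF d N, (X a e ≤ p' ↔ e ∈ T) := by
  simp only [Cyl, Set.mem_iInter, Set.mem_preimage, cylSet]
  refine forall_congr' fun e => forall_congr' fun _ => ?_
  by_cases h : e ∈ T <;> simp [h]

lemma mem_Cyl_self {p' : ℝ} (a : Ω) :
    a ∈ Cyl X p' N ((bigF d N).filter (fun e => X a e ≤ p')) := by
  classical
  rw [mem_Cyl]
  intro e he
  simp [Finset.mem_filter, he]

lemma Cyl_disjoint {p' : ℝ} {T T' : Finset (Edge d)} (hT : T ⊆ bigF d N)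
    (hT' : T' ⊆ bigF d N) (hne : T ≠ T') : Cyl X p' N T ∩ Cyl X p' N T' = ∅ := by
  by_contra h
  obtain ⟨a, ha, ha'⟩ := Set.nonempty_iff_ne_empty.mpr h
  apply hne
  ext e
  constructor
  · intro he
    exact ((mem_Cyl X).mp ha' e (hT he)).mp (((mem_Cyl X).mp ha e (hT he)).mpr he)
  · intro he
    exact ((mem_Cyl X).mp ha e (hT' he)).mp (((mem_Cyl X).mp ha' e (hT' he)).mpr he)

lemma measurable_Cyl (hmeas : ∀ e, Measurable fun a => X a e) (p' : ℝ) (T : Finset (Edge d)) :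
    MeasurableSet (Cyl X p' N T) := by
  exact Finset.measurableSet_biInter _
    (fun e _ => (hmeas e) (measurable_cylSet p' T e))

lemma openE_eq (q : ℝ) {S : Fin (N + 1) → V d} (hS : IsSAW S) :
    openE X q S = ⋂ e ∈ edgeFinset S, (fun a => X a e) ⁻¹' Set.Iic q := by
  ext a
  simp only [openE, Set.mem_setOf_eq, Set.mem_iInter, Set.mem_preimage, Set.mem_Iic,
    mem_edgeFinset]
  rw [openPath_iff hS]
  constructor
  · rintro h e ⟨n, rfl⟩
    exact h n
  · intro h n
    exact h _ ⟨n, rfl⟩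

lemma measurable_openE (hmeas : ∀ e, Measurable fun a => X a e) (q : ℝ)
    {S : Fin (N + 1) → V d} (hS : IsSAW S) : MeasurableSet (openE X q S) := by
  rw [openE_eq X q hS]
  exact Finset.measurableSet_biInter _ (fun e _ => (hmeas e) measurableSet_Iic)

end Prob

section Prob2

variable {d N : ℕ} [NeZero d] {Ω : Type*} [MeasurableSpace Ω]
  (X : Ω → Edge d → ℝ) (μ : Measure Ω)

lemma meas_pre (hmeas : ∀ e, Measurable fun a => X a e)
    (hunif : ∀ e : Edge d,
      Measure.map (fun a => X a e) μ = volume.restrict (Set.Icc (0 : ℝ) 1))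
    (e : Edge d) {B : Set ℝ} (hB : MeasurableSet B) :
    μ ((fun a => X a e) ⁻¹' B) = volume.restrict (Set.Icc (0 : ℝ) 1) B := by
  rw [← hunif e, Measure.map_apply (hmeas e) hB]

lemma meas_pre_Iic (hmeas : ∀ e, Measurable fun a => X a e)
    (hunif : ∀ e : Edge d,
      Measure.map (fun a => X a e) μ = volume.restrict (Set.Icc (0 : ℝ) 1))
    {q : ℝ} (h0 : 0 ≤ q) (h1 : q ≤ 1) (e : Edge d) :
    μ ((fun a => X a e) ⁻¹' Set.Iic q) = ENNReal.ofReal q := by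
  rw [meas_pre X μ hmeas hunif e measurableSet_Iic,
    Measure.restrict_apply measurableSet_Iic]
  have h : Set.Iic q ∩ Set.Icc (0 : ℝ) 1 = Set.Icc 0 q := by
    ext x
    simp only [Set.mem_inter_iff, Set.mem_Iic, Set.mem_Icc]
    exact ⟨fun ⟨a, b, _⟩ => ⟨b, a⟩, fun ⟨a, b⟩ => ⟨b, a, le_trans b h1⟩⟩
  rw [h, Real.volume_Icc, sub_zero]

lemma meas_pre_Iic_compl (hmeas : ∀ e, Measurable fun a => X a e)
    (hunif : ∀ e : Edge d,
      Measure.map (fun a => X a e) μ = volume.restrict (Set.Icc (0 : ℝ) 1))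
    {q : ℝ} (h0 : 0 ≤ q) (h1 : q ≤ 1) (e : Edge d) :
    μ ((fun a => X a e) ⁻¹' (Set.Iic q)ᶜ) = ENNReal.ofReal (1 - q) := by
  rw [meas_pre X μ hmeas hunif e measurableSet_Iic.compl,
    Measure.restrict_apply measurableSet_Iic.compl]
  have h : (Set.Iic q)ᶜ ∩ Set.Icc (0 : ℝ) 1 = Set.Ioc q 1 := by
    ext x
    simp only [Set.mem_inter_iff, Set.mem_compl_iff, Set.mem_Iic, Set.mem_Icc, Set.mem_Ioc,
      not_le]
    exact ⟨fun ⟨a, _, c⟩ => ⟨a, c⟩, fun ⟨a, b⟩ => ⟨a, le_trans h0 a.le, b⟩⟩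
  rw [h, Real.volume_Ioc]

lemma meas_iInter_pre
    (hindep : iIndepFun (fun e a => X a e) μ)
    (F : Finset (Edge d)) (G : Edge d → Set ℝ) (hG : ∀ e, MeasurableSet (G e)) :
    μ (⋂ e ∈ F, (fun a => X a e) ⁻¹' G e) = ∏ e ∈ F, μ ((fun a => X a e) ⁻¹' G e) :=
  hindep.meas_biInter (fun e _ => ⟨G e, hG e, rfl⟩)

lemma openE_inter_Cyl (q p' : ℝ) {S : Fin (N + 1) → V d} (hS : IsSAW S)
    (hSm : S ∈ sawFinset d N) (T : Finset (Edge d)) :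
    openE X q S ∩ Cyl X p' N T =
      ⋂ e ∈ bigF d N, (fun a => X a e) ⁻¹'
        ((if e ∈ edgeFinset S then Set.Iic q else Set.univ) ∩ cylSet p' T e) := by
  classical
  ext a
  simp only [openE_eq X q hS, Cyl, Set.mem_inter_iff, Set.mem_iInter, Set.mem_preimage]
  constructor
  · rintro ⟨h1, h2⟩ e he
    refine ⟨?_, h2 e he⟩
    split
    next hes => exact h1 e hes
    next => trivial
  · intro h
    refine ⟨fun e he => ?_, fun e he => (h e he).2⟩
    have h3 := (h e (edgeFinset_subset_bigF hSm he)).1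
    rwa [if_pos he] at h3

lemma ratio_lemma [IsProbabilityMeasure μ]
    (hmeas : ∀ e, Measurable fun a => X a e)
    (hunif : ∀ e : Edge d,
      Measure.map (fun a => X a e) μ = volume.restrict (Set.Icc (0 : ℝ) 1))
    (hindep : iIndepFun (fun e a => X a e) μ)
    {p p' : ℝ} (hp : 0 < p) (hpp' : p ≤ p') (hp'1 : p' < 1)
    {S : Fin (N + 1) → V d} (hS : IsSAW S) (hSm : S ∈ sawFinset d N)
    (T : Finset (Edge d)) :
    ENNReal.ofReal p' ^ N * μ (openE X p S ∩ Cyl X p' N T)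
      = ENNReal.ofReal p ^ N * μ (openE X p' S ∩ Cyl X p' N T) := by
  classical
  have hGm : ∀ q : ℝ, ∀ e : Edge d, MeasurableSet
      ((if e ∈ edgeFinset S then Set.Iic q else Set.univ) ∩ cylSet p' T e) := by
    intro q e
    apply MeasurableSet.inter _ (measurable_cylSet p' T e)
    split <;> [exact measurableSet_Iic; exact MeasurableSet.univ]
  rw [openE_inter_Cyl X p p' hS hSm T, openE_inter_Cyl X p' p' hS hSm T,
    meas_iInter_pre X μ hindep _ _ (hGm p), meas_iInter_pre X μ hindep _ _ (hGm p')]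
  have hsub : edgeFinset S ⊆ bigF d N := edgeFinset_subset_bigF hSm
  rw [← Finset.prod_sdiff hsub, ← Finset.prod_sdiff hsub]
  have hA : ∀ q : ℝ, ∀ e ∈ bigF d N \ edgeFinset S,
      μ ((fun a => X a e) ⁻¹' ((if e ∈ edgeFinset S then Set.Iic q else Set.univ) ∩
        cylSet p' T e)) = μ ((fun a => X a e) ⁻¹' cylSet p' T e) := by
    intro q e he
    rw [Finset.mem_sdiff] at he
    rw [if_neg he.2, Set.univ_inter]
  rw [Finset.prod_congr rfl (hA p), Finset.prod_congr rfl (hA p')]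
  have hcard : (edgeFinset S).card = N := card_edgeFinset hS
  have hB : ENNReal.ofReal p' ^ N * ∏ e ∈ edgeFinset S,
        μ ((fun a => X a e) ⁻¹' ((if e ∈ edgeFinset S then Set.Iic p else Set.univ) ∩
          cylSet p' T e))
      = ENNReal.ofReal p ^ N * ∏ e ∈ edgeFinset S,
        μ ((fun a => X a e) ⁻¹' ((if e ∈ edgeFinset S then Set.Iic p' else Set.univ) ∩
          cylSet p' T e)) := by
    have hc1 : ENNReal.ofReal p' ^ N = ∏ _e ∈ edgeFinset S, ENNReal.ofReal p' := by
      rw [Finset.prod_const, hcard]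
    have hc2 : ENNReal.ofReal p ^ N = ∏ _e ∈ edgeFinset S, ENNReal.ofReal p := by
      rw [Finset.prod_const, hcard]
    rw [hc1, hc2, ← Finset.prod_mul_distrib, ← Finset.prod_mul_distrib]
    apply Finset.prod_congr rfl
    intro e he
    rw [if_pos he, if_pos he]
    by_cases hT : e ∈ T
    · have hc : cylSet p' T e = Set.Iic p' := if_pos hT
      have h1 : Set.Iic p ∩ cylSet p' T e = Set.Iic p := by
        rw [hc]
        exact Set.Iic_inter_Iic.trans (by rw [min_eq_left hpp'])
      have h2 : Set.Iic p' ∩ cylSet p' T e = Set.Iic p' := by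
        rw [hc, Set.Iic_inter_Iic, min_self]
      rw [h1, h2, meas_pre_Iic X μ hmeas hunif hp.le (hpp'.trans hp'1.le) e,
        meas_pre_Iic X μ hmeas hunif (hp.trans_le hpp').le hp'1.le e, mul_comm]
    · have hc : cylSet p' T e = (Set.Iic p')ᶜ := if_neg hT
      have h1 : Set.Iic p ∩ cylSet p' T e = ∅ := by
        rw [hc]
        ext x
        simp only [Set.mem_inter_iff, Set.mem_Iic, Set.mem_compl_iff, Set.mem_empty_iff_false,
          iff_false, not_and, not_not]
        exact fun hx => hx.trans hpp'
      have h2 : Set.Iic p' ∩ cylSet p' T e = ∅ := by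
        rw [hc]
        ext x
        simp only [Set.mem_inter_iff, Set.mem_Iic, Set.mem_compl_iff, Set.mem_empty_iff_false,
          iff_false, not_and, not_not]
        exact fun hx => hx
      rw [h1, h2]
      simp
  calc ENNReal.ofReal p' ^ N * ((∏ e ∈ bigF d N \ edgeFinset S,
          μ ((fun a => X a e) ⁻¹' cylSet p' T e)) * ∏ e ∈ edgeFinset S,
          μ ((fun a => X a e) ⁻¹' ((if e ∈ edgeFinset S then Set.Iic p else Set.univ) ∩
            cylSet p' T e)))
      = (∏ e ∈ bigF d N \ edgeFinset S, μ ((fun a => X a e) ⁻¹' cylSet p' T e)) *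
        (ENNReal.ofReal p' ^ N * ∏ e ∈ edgeFinset S,
          μ ((fun a => X a e) ⁻¹' ((if e ∈ edgeFinset S then Set.Iic p else Set.univ) ∩
            cylSet p' T e))) := by ring
    _ = (∏ e ∈ bigF d N \ edgeFinset S, μ ((fun a => X a e) ⁻¹' cylSet p' T e)) *
        (ENNReal.ofReal p ^ N * ∏ e ∈ edgeFinset S,
          μ ((fun a => X a e) ⁻¹' ((if e ∈ edgeFinset S then Set.Iic p' else Set.univ) ∩
            cylSet p' T e))) := by rw [hB]
    _ = _ := by ring

end Prob2
section Prob3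

variable {d N : ℕ} [NeZero d] {Ω : Type*} [MeasurableSpace Ω]
  (X : Ω → Edge d → ℝ) (μ : Measure Ω)

lemma cyl_iff_edge {p' : ℝ} {T : Finset (Edge d)} {a : Ω} (ha : a ∈ Cyl X p' N T)
    {S : Fin (N + 1) → V d} (hSm : S ∈ sawFinset d N) (n : Fin N) :
    X a (pathEdge S n) ≤ p' ↔ pathEdge S n ∈ T :=
  (mem_Cyl X).mp ha _ (edgeFinset_subset_bigF hSm (mem_edgeFinset.mpr ⟨n, rfl⟩))

lemma openE_inter_Cyl_self {p' : ℝ} {T : Finset (Edge d)}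
    {S : Fin (N + 1) → V d} (hSm : S ∈ sawFinset d N) :
    openE X p' S ∩ Cyl X p' N T =
      if (∀ n : Fin N, pathEdge S n ∈ T) then Cyl X p' N T else (∅ : Set Ω) := by
  have hS : IsSAW S := (mem_sawFinset.mp hSm).1
  split
  next h =>
    apply Set.inter_eq_self_of_subset_right
    intro a ha
    show OpenPath _ S
    rw [openPath_iff hS]
    intro n
    exact (cyl_iff_edge X ha hSm n).mpr (h n)
  next h =>
    push_neg at h
    obtain ⟨n, hn⟩ := h
    ext a
    simp only [Set.mem_inter_iff, Set.mem_empty_iff_false, iff_false, not_and]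
    intro hopen ha
    have : OpenPath (fun e => X a e ≤ p') S := hopen
    rw [openPath_iff hS] at this
    exact hn ((cyl_iff_edge X ha hSm n).mp (this n))

open Classical in
lemma sum_openE_p' (p' : ℝ) (T : Finset (Edge d)) :
    ∑ S ∈ sawFinset d N, μ (openE X p' S ∩ Cyl X p' N T)
      = (((sawFinset d N).filter (fun S => ∀ n : Fin N, pathEdge S n ∈ T)).card : ENNReal)
          * μ (Cyl X p' N T) := by
  have h : ∀ S ∈ sawFinset d N, μ (openE X p' S ∩ Cyl X p' N T)
      = if (∀ n : Fin N, pathEdge S n ∈ T) then μ (Cyl X p' N T) else 0 := by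
    intro S hSm
    rw [openE_inter_Cyl_self X hSm]
    split <;> simp
  rw [Finset.sum_congr rfl h, Finset.sum_ite, Finset.sum_const, Finset.sum_const]
  simp [nsmul_eq_mul]

open Classical in
lemma Z_on_Cyl {p' : ℝ} {T : Finset (Edge d)} {a : Ω} (ha : a ∈ Cyl X p' N T) :
    Z (fun e => X a e ≤ p') N 0
      = ((sawFinset d N).filter (fun S => ∀ n : Fin N, pathEdge S n ∈ T)).card := by
  rw [Z_eq_card]
  congr 1
  apply Finset.filter_congr
  intro S hSm
  rw [openPath_iff (mem_sawFinset.mp hSm).1]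
  exact forall_congr' fun n => cyl_iff_edge X ha hSm n

open Classical in
lemma Z_cast_sum (q : ℝ) (a : Ω) :
    ((Z (fun e => X a e ≤ q) N 0 : ENNReal))
      = ∑ S ∈ sawFinset d N, Set.indicator (openE X q S) 1 a := by
  rw [Z_eq_card, Finset.card_filter, Nat.cast_sum]
  apply Finset.sum_congr rfl
  intro S _
  rw [Set.indicator_apply]
  by_cases h : a ∈ openE X q S
  · have h' : OpenPath (fun e => X a e ≤ q) S := h
    rw [if_pos h, if_pos h']
    simp
  · have h' : ¬ OpenPath (fun e => X a e ≤ q) S := h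
    rw [if_neg h, if_neg h']
    simp

lemma measurable_Z_ennreal (hmeas : ∀ e, Measurable fun a => X a e) (q : ℝ) :
    Measurable (fun a : Ω => ((Z (fun e => X a e ≤ q) N 0 : ENNReal))) := by
  classical
  simp only [Z_cast_sum X q]
  apply Finset.measurable_sum
  intro S hSm
  exact (measurable_const.indicator (measurable_openE X hmeas q (mem_sawFinset.mp hSm).1))

lemma lintegral_Z (hmeas : ∀ e, Measurable fun a => X a e) (q p' : ℝ) (T : Finset (Edge d)) :
    ∫⁻ a in Cyl X p' N T, ((Z (fun e => X a e ≤ q) N 0 : ENNReal)) ∂μ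
      = ∑ S ∈ sawFinset d N, μ (openE X q S ∩ Cyl X p' N T) := by
  classical
  simp only [Z_cast_sum X q]
  rw [lintegral_finset_sum]
  · apply Finset.sum_congr rfl
    intro S hSm
    have hoe : MeasurableSet (openE X q S) :=
      measurable_openE X hmeas q (mem_sawFinset.mp hSm).1
    rw [lintegral_indicator_one hoe, Measure.restrict_apply hoe]
  · intro S hSm
    exact (measurable_const.indicator (measurable_openE X hmeas q (mem_sawFinset.mp hSm).1))

end Prob3
section Prob4

variable {d N : ℕ} [NeZero d] {Ω : Type*} [MeasurableSpace Ω]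
  (X : Ω → Edge d → ℝ) (μ : Measure Ω)

open Classical in
lemma perT_bound [IsProbabilityMeasure μ]
    (hmeas : ∀ e, Measurable fun a => X a e)
    (hunif : ∀ e : Edge d,
      Measure.map (fun a => X a e) μ = volume.restrict (Set.Icc (0 : ℝ) 1))
    (hindep : iIndepFun (fun e a => X a e) μ)
    {p p' c : ℝ} (hp : 0 < p) (hpp' : p ≤ p') (hp'1 : p' < 1) (hc : 0 < c)
    (T : Finset (Edge d)) :
    μ ({a : Ω | c ^ N * (Z (fun e => X a e ≤ p') N 0 : ℝ) < (Z (fun e => X a e ≤ p) N 0 : ℝ)}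
        ∩ Cyl X p' N T)
      ≤ ENNReal.ofReal ((p / (p' * c)) ^ N) * μ (Cyl X p' N T) := by
  have hp'0 : 0 < p' := hp.trans_le hpp'
  set A : Set Ω := {a : Ω | c ^ N * (Z (fun e => X a e ≤ p') N 0 : ℝ)
    < (Z (fun e => X a e ≤ p) N 0 : ℝ)} with hA
  set k : ℕ := ((sawFinset d N).filter (fun S => ∀ n : Fin N, pathEdge S n ∈ T)).card with hkdef
  by_cases hk : k = 0
  · have hempty : A ∩ Cyl X p' N T = ∅ := by
      ext a
      simp only [Set.mem_inter_iff, Set.mem_empty_iff_false, iff_false, not_and]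
      intro hAa hCa
      have hz' : Z (fun e => X a e ≤ p') N 0 = 0 := (Z_on_Cyl X hCa).trans hk
      have hzp : Z (fun e => X a e ≤ p) N 0 = 0 :=
        Nat.le_zero.mp (hz' ▸ Z_mono (fun e (h : X a e ≤ p) => h.trans hpp') N)
      rw [hA, Set.mem_setOf_eq, hz', hzp] at hAa
      simp at hAa
    rw [hempty]
    simp
  · have hk1 : 1 ≤ (k : ℝ) := by exact_mod_cast Nat.one_le_iff_ne_zero.mpr hk
    set c' : ENNReal := ENNReal.ofReal (c ^ N * k) with hc'
    have hZm : Measurable (fun a : Ω => ((Z (fun e => X a e ≤ p) N 0 : ENNReal))) :=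
      measurable_Z_ennreal X hmeas p
    have hBm : MeasurableSet {a : Ω | c' ≤ ((Z (fun e => X a e ≤ p) N 0 : ENNReal))} :=
      measurableSet_le measurable_const hZm
    have h1 : A ∩ Cyl X p' N T ⊆
        {a : Ω | c' ≤ ((Z (fun e => X a e ≤ p) N 0 : ENNReal))} ∩ Cyl X p' N T := by
      rintro a ⟨hAa, hCa⟩
      refine ⟨?_, hCa⟩
      have hzk : Z (fun e => X a e ≤ p') N 0 = k := Z_on_Cyl X hCa
      rw [hA, Set.mem_setOf_eq, hzk] at hAa
      have : c ^ N * (k : ℝ) ≤ ((Z (fun e => X a e ≤ p) N 0 : ℝ)) := hAa.le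
      calc c' ≤ ENNReal.ofReal ((Z (fun e => X a e ≤ p) N 0 : ℝ)) :=
            ENNReal.ofReal_le_ofReal this
        _ = ((Z (fun e => X a e ≤ p) N 0 : ENNReal)) := ENNReal.ofReal_natCast _
    have h2 : c' * μ (A ∩ Cyl X p' N T)
        ≤ ∫⁻ a in Cyl X p' N T, ((Z (fun e => X a e ≤ p) N 0 : ENNReal)) ∂μ := by
      have hsub : μ (A ∩ Cyl X p' N T)
          ≤ (μ.restrict (Cyl X p' N T))
            {a : Ω | c' ≤ ((Z (fun e => X a e ≤ p) N 0 : ENNReal))} := by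
        rw [Measure.restrict_apply hBm]
        exact measure_mono h1
      calc c' * μ (A ∩ Cyl X p' N T)
          ≤ c' * (μ.restrict (Cyl X p' N T))
              {a : Ω | c' ≤ ((Z (fun e => X a e ≤ p) N 0 : ENNReal))} := by
            exact mul_le_mul_right hsub c'
        _ ≤ _ := mul_meas_ge_le_lintegral₀ hZm.aemeasurable c'
    have h3 : ENNReal.ofReal (p' ^ N)
          * ∫⁻ a in Cyl X p' N T, ((Z (fun e => X a e ≤ p) N 0 : ENNReal)) ∂μ
        = ENNReal.ofReal (p ^ N) * ((k : ENNReal) * μ (Cyl X p' N T)) := by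
      rw [lintegral_Z X μ hmeas p p' T]
      calc ENNReal.ofReal (p' ^ N) * ∑ S ∈ sawFinset d N, μ (openE X p S ∩ Cyl X p' N T)
          = ∑ S ∈ sawFinset d N, ENNReal.ofReal p' ^ N * μ (openE X p S ∩ Cyl X p' N T) := by
            rw [ENNReal.ofReal_pow hp'0.le, Finset.mul_sum]
        _ = ∑ S ∈ sawFinset d N, ENNReal.ofReal p ^ N * μ (openE X p' S ∩ Cyl X p' N T) :=
            Finset.sum_congr rfl (fun S hSm =>
              ratio_lemma X μ hmeas hunif hindep hp hpp' hp'1 (mem_sawFinset.mp hSm).1 hSm T)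
        _ = ENNReal.ofReal p ^ N * ∑ S ∈ sawFinset d N, μ (openE X p' S ∩ Cyl X p' N T) := by
            rw [Finset.mul_sum]
        _ = ENNReal.ofReal (p ^ N) * ((k : ENNReal) * μ (Cyl X p' N T)) := by
            rw [sum_openE_p' X μ p' T, ENNReal.ofReal_pow hp.le]
    -- final algebra
    set κ : ENNReal := ENNReal.ofReal (p' ^ N * (c ^ N * k)) with hκ
    have hκ0 : κ ≠ 0 := by
      rw [hκ]
      simp only [ne_eq, ENNReal.ofReal_eq_zero, not_le]
      positivity
    have hκtop : κ ≠ ⊤ := ENNReal.ofReal_ne_top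
    rw [← ENNReal.mul_le_mul_iff_right hκ0 hκtop]
    have hlhs : κ * μ (A ∩ Cyl X p' N T)
        ≤ ENNReal.ofReal (p ^ N) * ((k : ENNReal) * μ (Cyl X p' N T)) := by
      rw [hκ, ENNReal.ofReal_mul (by positivity), ← hc', mul_assoc]
      calc ENNReal.ofReal (p' ^ N) * (c' * μ (A ∩ Cyl X p' N T))
          ≤ ENNReal.ofReal (p' ^ N)
            * ∫⁻ a in Cyl X p' N T, ((Z (fun e => X a e ≤ p) N 0 : ENNReal)) ∂μ :=
            mul_le_mul_right h2 _
        _ = _ := h3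
    have hrhs : κ * (ENNReal.ofReal ((p / (p' * c)) ^ N) * μ (Cyl X p' N T))
        = ENNReal.ofReal (p ^ N) * ((k : ENNReal) * μ (Cyl X p' N T)) := by
      rw [← mul_assoc, hκ, ← ENNReal.ofReal_mul (by positivity)]
      have hreal : p' ^ N * (c ^ N * (k : ℝ)) * (p / (p' * c)) ^ N = p ^ N * k := by
        rw [div_pow, mul_pow]
        field_simp
      rw [hreal, ENNReal.ofReal_mul (by positivity), mul_assoc, ENNReal.ofReal_natCast]
    rw [hrhs]
    exact hlhs

end Prob4
section Prob5

variable {d : ℕ} [NeZero d] {Ω : Type*} [MeasurableSpace Ω]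
  (X : Ω → Edge d → ℝ) (μ : Measure Ω)

open Classical in
lemma perN_bound [IsProbabilityMeasure μ]
    (hmeas : ∀ e, Measurable fun a => X a e)
    (hunif : ∀ e : Edge d,
      Measure.map (fun a => X a e) μ = volume.restrict (Set.Icc (0 : ℝ) 1))
    (hindep : iIndepFun (fun e a => X a e) μ)
    {p p' c : ℝ} (hp : 0 < p) (hpp' : p ≤ p') (hp'1 : p' < 1) (hc : 0 < c) (N : ℕ) :
    μ {a : Ω | c ^ N * (Z (fun e => X a e ≤ p') N 0 : ℝ)
        < (Z (fun e => X a e ≤ p) N 0 : ℝ)}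
      ≤ ENNReal.ofReal ((p / (p' * c)) ^ N) := by
  set A : Set Ω := {a : Ω | c ^ N * (Z (fun e => X a e ≤ p') N 0 : ℝ)
    < (Z (fun e => X a e ≤ p) N 0 : ℝ)} with hA
  have hcover : ∀ a : Ω, ∃ T ∈ (bigF d N).powerset, a ∈ Cyl X p' N T := by
    intro a
    exact ⟨(bigF d N).filter (fun e => X a e ≤ p'),
      Finset.mem_powerset.mpr (Finset.filter_subset _ _), mem_Cyl_self X a⟩
  have hAsub : A ⊆ ⋃ T ∈ (bigF d N).powerset, A ∩ Cyl X p' N T := by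
    intro a ha
    obtain ⟨T, hT, haT⟩ := hcover a
    exact Set.mem_biUnion hT ⟨ha, haT⟩
  have hdisj : (↑((bigF d N).powerset) : Set (Finset (Edge d))).PairwiseDisjoint
      (fun T => Cyl X p' N T) := by
    intro T hT T' hT' hne
    simp only [Finset.coe_powerset, Set.mem_preimage, Set.mem_powerset_iff] at hT hT'
    rw [Function.onFun, Set.disjoint_iff_inter_eq_empty]
    exact Cyl_disjoint X (Finset.coe_subset.mp hT) (Finset.coe_subset.mp hT') hne
  have hCylm : ∀ T ∈ (bigF d N).powerset, MeasurableSet (Cyl X p' N T) :=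
    fun T _ => measurable_Cyl X hmeas p' T
  have hsum1 : ∑ T ∈ (bigF d N).powerset, μ (Cyl X p' N T) = 1 := by
    rw [← measure_biUnion_finset hdisj hCylm]
    have : (⋃ T ∈ (bigF d N).powerset, Cyl X p' N T) = Set.univ := by
      ext a
      simp only [Set.mem_iUnion, Set.mem_univ, iff_true]
      obtain ⟨T, hT, haT⟩ := hcover a
      exact ⟨T, hT, haT⟩
    rw [this, measure_univ]
  calc μ A ≤ μ (⋃ T ∈ (bigF d N).powerset, A ∩ Cyl X p' N T) := measure_mono hAsub
    _ ≤ ∑ T ∈ (bigF d N).powerset, μ (A ∩ Cyl X p' N T) := measure_biUnion_finset_le _ _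
    _ ≤ ∑ T ∈ (bigF d N).powerset, ENNReal.ofReal ((p / (p' * c)) ^ N) * μ (Cyl X p' N T) :=
        Finset.sum_le_sum (fun T _ =>
          perT_bound X μ hmeas hunif hindep hp hpp' hp'1 hc T)
    _ = ENNReal.ofReal ((p / (p' * c)) ^ N) * ∑ T ∈ (bigF d N).powerset, μ (Cyl X p' N T) := by
        rw [Finset.mul_sum]
    _ = ENNReal.ofReal ((p / (p' * c)) ^ N) := by rw [hsum1, mul_one]

end Prob5
section Det

lemma rpow_bound {d : ℕ} (z : ℕ → ℕ) (hz : ∀ N, z N ≤ (2 * d) ^ N) (N : ℕ) :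
    (z N : ℝ) ^ (1 / (N : ℝ)) ≤ max 1 (2 * (d : ℝ)) := by
  match N with
  | 0 =>
    simp only [Nat.cast_zero, div_zero, Real.rpow_zero]
    exact le_max_left _ _
  | (M + 1) =>
    have hcast : ((z (M + 1) : ℝ)) ≤ (2 * (d : ℝ)) ^ (M + 1) := by
      calc ((z (M + 1) : ℝ)) ≤ (((2 * d) ^ (M + 1) : ℕ) : ℝ) := by exact_mod_cast hz (M + 1)
        _ = (2 * (d : ℝ)) ^ (M + 1) := by push_cast; ring
    have hN0 : ((M + 1 : ℕ) : ℝ) ≠ 0 := by positivity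
    calc (z (M + 1) : ℝ) ^ (1 / ((M + 1 : ℕ) : ℝ))
        ≤ ((2 * (d : ℝ)) ^ (M + 1)) ^ (1 / ((M + 1 : ℕ) : ℝ)) :=
          Real.rpow_le_rpow (Nat.cast_nonneg _) hcast (by positivity)
      _ = 2 * (d : ℝ) := by
          rw [← Real.rpow_natCast (2 * (d : ℝ)) (M + 1), ← Real.rpow_mul (by positivity),
            mul_one_div_cancel hN0, Real.rpow_one]
      _ ≤ max 1 (2 * (d : ℝ)) := le_max_right _ _

open Filter in
lemma det_limsup_le {d : ℕ} {p p' : ℝ} (hp : 0 < p) (hpp' : p ≤ p')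
    (zp zp' : ℕ → ℕ)
    (hbp : ∀ N, zp N ≤ (2 * d) ^ N) (hbp' : ∀ N, zp' N ≤ (2 * d) ^ N)
    (h : ∀ j : ℕ, ∀ᶠ N in atTop,
      ¬ ((1 + 1 / ((j : ℝ) + 1)) * (p / p')) ^ N * (zp' N : ℝ) < (zp N : ℝ)) :
    limsup (fun N : ℕ => (zp N : ℝ) ^ (1 / (N : ℝ))) atTop / p
      ≤ limsup (fun N : ℕ => (zp' N : ℝ) ^ (1 / (N : ℝ))) atTop / p' := by
  have hp'0 : 0 < p' := hp.trans_le hpp'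
  set f : ℕ → ℝ := fun N => (zp N : ℝ) ^ (1 / (N : ℝ)) with hfdef
  set g : ℕ → ℝ := fun N => (zp' N : ℝ) ^ (1 / (N : ℝ)) with hgdef
  have hf0 : ∀ N, 0 ≤ f N := fun N => Real.rpow_nonneg (Nat.cast_nonneg _) _
  have hg0 : ∀ N, 0 ≤ g N := fun N => Real.rpow_nonneg (Nat.cast_nonneg _) _
  have hgB : IsBoundedUnder (· ≤ ·) atTop g :=
    isBoundedUnder_of ⟨max 1 (2 * (d : ℝ)), fun N => rpow_bound zp' hbp' N⟩
  have hfCo : IsCoboundedUnder (· ≤ ·) atTop f :=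
    (isBoundedUnder_of ⟨0, fun N => hf0 N⟩ :
      IsBoundedUnder (· ≥ ·) atTop f).isCoboundedUnder_le
  set L : ℝ := limsup g atTop with hLdef
  have hL0 : 0 ≤ L :=
    le_limsup_of_frequently_le (Frequently.of_forall fun N => hg0 N) hgB
  have key : ∀ j : ℕ, limsup f atTop
      ≤ ((1 + 1 / ((j : ℝ) + 1)) * (p / p')) * (L + 1 / ((j : ℝ) + 1)) := by
    intro j
    set ε : ℝ := 1 / ((j : ℝ) + 1) with hεdef
    have hε : 0 < ε := by positivity
    set c : ℝ := (1 + ε) * (p / p') with hcdef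
    have hc : 0 < c := by positivity
    have h1 : ∀ᶠ N in atTop, g N < L + ε :=
      eventually_lt_of_limsup_lt (by linarith [lt_add_of_pos_right L hε]) hgB
    have h2 := h j
    have h3 : ∀ᶠ N : ℕ in atTop, 1 ≤ N := eventually_ge_atTop 1
    apply limsup_le_of_le hfCo
    filter_upwards [h1, h2, h3] with N h1N h2N h3N
    have hN0 : ((N : ℕ) : ℝ) ≠ 0 := by
      simp only [ne_eq, Nat.cast_eq_zero]
      omega
    have hle : (zp N : ℝ) ≤ c ^ N * (zp' N : ℝ) := not_lt.mp h2N
    have step1 : f N ≤ (c ^ N * (zp' N : ℝ)) ^ (1 / (N : ℝ)) :=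
      Real.rpow_le_rpow (Nat.cast_nonneg _) hle (by positivity)
    have step2 : (c ^ N * (zp' N : ℝ)) ^ (1 / (N : ℝ)) = c * g N := by
      rw [Real.mul_rpow (by positivity) (Nat.cast_nonneg _)]
      congr 1
      rw [← Real.rpow_natCast c N, ← Real.rpow_mul hc.le, mul_one_div_cancel hN0,
        Real.rpow_one]
    calc f N ≤ c * g N := step2 ▸ step1
      _ ≤ c * (L + ε) := mul_le_mul_of_nonneg_left h1N.le hc.le
  have htend : Tendsto
      (fun j : ℕ => ((1 + 1 / ((j : ℝ) + 1)) * (p / p')) * (L + 1 / ((j : ℝ) + 1)))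
      atTop (nhds ((1 + 0) * (p / p') * (L + 0))) := by
    have t0 : Tendsto (fun j : ℕ => 1 / ((j : ℝ) + 1)) atTop (nhds 0) :=
      tendsto_one_div_add_atTop_nhds_zero_nat
    exact ((tendsto_const_nhds.add t0).mul tendsto_const_nhds).mul (tendsto_const_nhds.add t0)
  have hlim : limsup f atTop ≤ (p / p') * L := by
    have h := ge_of_tendsto' htend key
    calc limsup f atTop ≤ (1 + 0) * (p / p') * (L + 0) := h
      _ = (p / p') * L := by ring
  rw [div_le_div_iff₀ hp hp'0]
  calc limsup f atTop * p' ≤ ((p / p') * L) * p' := mul_le_mul_of_nonneg_right hlim hp'0.le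
    _ = L * p := by field_simp

end Det
/-- under the standard monotone coupling of bond percolation on `ℤ^d`
(`d ≥ 2`) with parameters `0 < p ≤ p' < 1`, almost surely
`limsup_N Z_N(ω_p)^{1/N} / p ≤ limsup_N Z_N(ω_{p'})^{1/N} / p'`. -/
theorem statement_5 (d : ℕ) (hd : 2 ≤ d)
    {Ω : Type*} [MeasurableSpace Ω] (μ : Measure Ω) [IsProbabilityMeasure μ]
    (X : Ω → Edge d → ℝ) (hmeas : ∀ e, Measurable fun a => X a e)
    (hunif : ∀ e : Edge d,
      Measure.map (fun a => X a e) μ = volume.restrict (Set.Icc (0 : ℝ) 1))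
    (hindep : iIndepFun (fun e a => X a e) μ)
    (p p' : ℝ) (hp : 0 < p) (hpp' : p ≤ p') (hp' : p' < 1) :
    ∀ᵐ a ∂μ,
      limsup (fun N : ℕ => (Z (fun e => X a e ≤ p) N 0 : ℝ) ^ (1 / (N : ℝ))) atTop / p
        ≤ limsup (fun N : ℕ => (Z (fun e => X a e ≤ p') N 0 : ℝ) ^ (1 / (N : ℝ))) atTop / p' := by
  haveI : NeZero d := ⟨by omega⟩
  have hp'0 : 0 < p' := hp.trans_le hpp'
  have hBC : ∀ᵐ a ∂μ, ∀ j : ℕ, ∀ᶠ N in atTop,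
      ¬ ((1 + 1 / ((j : ℝ) + 1)) * (p / p')) ^ N * (Z (fun e => X a e ≤ p') N 0 : ℝ)
        < (Z (fun e => X a e ≤ p) N 0 : ℝ) := by
    rw [ae_all_iff]
    intro j
    set c : ℝ := (1 + 1 / ((j : ℝ) + 1)) * (p / p') with hcdef
    have hc : 0 < c := by positivity
    have hr0 : 0 ≤ p / (p' * c) := by positivity
    have hr : p / (p' * c) < 1 := by
      have hcc : p / (p' * c) = 1 / (1 + 1 / ((j : ℝ) + 1)) := by
        rw [hcdef]
        field_simp
      rw [hcc]
      rw [div_lt_one (by positivity)]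
      have : 0 < 1 / ((j : ℝ) + 1) := by positivity
      linarith
    have hsum : (∑' N : ℕ, μ {a : Ω | c ^ N * (Z (fun e => X a e ≤ p') N 0 : ℝ)
        < (Z (fun e => X a e ≤ p) N 0 : ℝ)}) ≠ ⊤ := by
      have hle : (∑' N : ℕ, μ {a : Ω | c ^ N * (Z (fun e => X a e ≤ p') N 0 : ℝ)
          < (Z (fun e => X a e ≤ p) N 0 : ℝ)})
          ≤ ∑' N : ℕ, (ENNReal.ofReal (p / (p' * c))) ^ N := by
        apply ENNReal.tsum_le_tsum
        intro N
        calc μ {a : Ω | c ^ N * (Z (fun e => X a e ≤ p') N 0 : ℝ)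
              < (Z (fun e => X a e ≤ p) N 0 : ℝ)}
            ≤ ENNReal.ofReal ((p / (p' * c)) ^ N) :=
              perN_bound X μ hmeas hunif hindep hp hpp' hp' hc N
          _ = (ENNReal.ofReal (p / (p' * c))) ^ N := ENNReal.ofReal_pow hr0 N
      apply ne_top_of_le_ne_top _ hle
      rw [ENNReal.tsum_geometric]
      apply ENNReal.inv_ne_top.mpr
      have hlt : ENNReal.ofReal (p / (p' * c)) < 1 := ENNReal.ofReal_lt_one.mpr hr
      simp only [ne_eq, tsub_eq_zero_iff_le, not_le]
      exact hlt
    have := ae_eventually_notMem hsum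
    filter_upwards [this] with a ha
    filter_upwards [ha] with N hN
    exact hN
  filter_upwards [hBC] with a ha
  exact det_limsup_le hp hpp'
    (fun N => Z (fun e => X a e ≤ p) N 0) (fun N => Z (fun e => X a e ≤ p') N 0)
    (fun N => Z_le_pow _ N) (fun N => Z_le_pow _ N) ha

end SAW
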